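/- Let n ≥ 4 and let α₁,…,α_n be positive integers satisfying the genus-zero equation 2 + (n−2)·A = Σ_{i=1}^n A_i. Then for any four pairwise distinct indices j, k, l, m, one has gcd(α_j,α_k) = 1 or gcd(α_l,α_m) = 1; that is, there cannot exist two disjoint non-coprime pairs among the α_i. -/

import Mathlib

/-- `A = (∏ i, α i) / lcm(α₁,…,α_n)`, an exact natural-number division since the
lcm of a finite family of positive integers divides their product. -/
def brA (n : ℕ) (α : Fin n → ℕ) : ℕ :=
  (∏ i, α i) / Finset.univ.lcm α

/-- `A_i = (∏_{j ≠ i} α j) / lcm_{j ≠ i}(α j)`. -/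
def brAi (n : ℕ) (α : Fin n → ℕ) (i : Fin n) : ℕ :=
  (∏ j ∈ Finset.univ.erase i, α j) / (Finset.univ.erase i).lcm α

/-- The genus-zero equation `2 + (n − 2)·A = Σ_{i=1}^n A_i` as an identity of
rational numbers. -/
def genusEq (n : ℕ) (α : Fin n → ℕ) : Prop :=
  (2 : ℚ) + ((n : ℚ) - 2) * (brA n α : ℚ) = ∑ i, (brAi n α i : ℚ)

private lemma lcm_dvd_prod' {ι : Type*} [DecidableEq ι] (s : Finset ι) (f : ι → ℕ) :
    s.lcm f ∣ ∏ i ∈ s, f i := by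
  induction s using Finset.induction_on with
  | empty => simp
  | insert a s ha ih =>
    rw [Finset.lcm_insert, Finset.prod_insert ha]
    exact Nat.lcm_dvd (dvd_mul_right _ _) (ih.trans (dvd_mul_left _ _))

private lemma lcm_pos' {ι : Type*} [DecidableEq ι] (s : Finset ι) (f : ι → ℕ)
    (h : ∀ i ∈ s, 0 < f i) : 0 < s.lcm f := by
  rw [Nat.pos_iff_ne_zero, Ne, Finset.lcm_eq_zero_iff]
  rintro ⟨i, hi, h0⟩
  exact absurd h0 (h i hi).ne'

/-- The key factorization `A = Aᵢ · gcd(αᵢ, lcm_{j≠i} αⱼ)`. -/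
private lemma brA_eq (n : ℕ) (α : Fin n → ℕ) (hα : ∀ i, 0 < α i) (i : Fin n) :
    brA n α = brAi n α i * Nat.gcd (α i) ((Finset.univ.erase i).lcm α) := by
  set Li := (Finset.univ.erase i).lcm α with hLi
  set Pi := ∏ j ∈ Finset.univ.erase i, α j with hPi
  have hLidvd : Li ∣ Pi := lcm_dvd_prod' _ _
  have hLipos : 0 < Li := lcm_pos' _ _ (fun j _ => hα j)
  have hLdvd : Finset.univ.lcm α ∣ ∏ j, α j := lcm_dvd_prod' _ _
  have hLpos : 0 < Finset.univ.lcm α := lcm_pos' _ _ (fun j _ => hα j)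
  have hL : Finset.univ.lcm α = Nat.lcm (α i) Li := by
    conv_lhs => rw [← Finset.insert_erase (Finset.mem_univ i), Finset.lcm_insert]
    rw [lcm_eq_nat_lcm]
  have hP : ∏ j, α j = α i * Pi := (Finset.mul_prod_erase _ _ (Finset.mem_univ i)).symm
  apply Nat.eq_of_mul_eq_mul_right hLpos
  rw [brA, Nat.div_mul_cancel hLdvd]
  symm
  calc brAi n α i * Nat.gcd (α i) Li * Finset.univ.lcm α
      = brAi n α i * (Nat.gcd (α i) Li * Nat.lcm (α i) Li) := by rw [hL]; ring
    _ = brAi n α i * (α i * Li) := by rw [Nat.gcd_mul_lcm]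
    _ = α i * (brAi n α i * Li) := by ring
    _ = α i * Pi := by rw [brAi, ← hLi, ← hPi, Nat.div_mul_cancel hLidvd]
    _ = ∏ j, α j := hP.symm

private lemma brAi_pos (n : ℕ) (α : Fin n → ℕ) (hα : ∀ i, 0 < α i) (i : Fin n) :
    0 < brAi n α i := by
  have hLidvd : (Finset.univ.erase i).lcm α ∣ ∏ j ∈ Finset.univ.erase i, α j :=
    lcm_dvd_prod' _ _
  have hLipos : 0 < (Finset.univ.erase i).lcm α := lcm_pos' _ _ (fun j _ => hα j)
  have hPpos : 0 < ∏ j ∈ Finset.univ.erase i, α j :=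
    Finset.prod_pos (fun j _ => hα j)
  exact Nat.div_pos (Nat.le_of_dvd hPpos hLidvd) hLipos

/-- If `α i` is not coprime to some other `α k`, then `2 · Aᵢ ≤ A`. -/
private lemma two_brAi_le (n : ℕ) (α : Fin n → ℕ) (hα : ∀ i, 0 < α i)
    {i k : Fin n} (hik : i ≠ k) (h : Nat.gcd (α i) (α k) ≠ 1) :
    2 * brAi n α i ≤ brA n α := by
  set g := Nat.gcd (α i) ((Finset.univ.erase i).lcm α) with hg
  have hdvd : Nat.gcd (α i) (α k) ∣ g :=
    Nat.dvd_gcd (Nat.gcd_dvd_left _ _)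
      ((Nat.gcd_dvd_right _ _).trans
        (Finset.dvd_lcm (by simp [Finset.mem_erase, hik.symm])))
  have hgpos : 0 < g := Nat.gcd_pos_of_pos_left _ (hα i)
  have hne1 : g ≠ 1 := fun e => h (Nat.eq_one_of_dvd_one (e ▸ hdvd))
  have hg2 : 2 ≤ g := by omega
  calc 2 * brAi n α i ≤ g * brAi n α i := Nat.mul_le_mul_right _ hg2
    _ = brA n α := by rw [brA_eq n α hα i]; ring

theorem no_two_disjoint_noncoprime_pairs (n : ℕ) (hn : 4 ≤ n) (α : Fin n → ℕ)
    (hα : ∀ i, 0 < α i) (hg : genusEq n α) (j k l m : Fin n)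
    (hjk : j ≠ k) (hjl : j ≠ l) (hjm : j ≠ m) (hkl : k ≠ l) (hkm : k ≠ m)
    (hlm : l ≠ m) :
    Nat.gcd (α j) (α k) = 1 ∨ Nat.gcd (α l) (α m) = 1 := by
  by_contra hcon
  push_neg at hcon
  obtain ⟨h1, h2⟩ := hcon
  set T : Finset (Fin n) := {j, k, l, m} with hT
  have hcardT : T.card = 4 := by
    rw [hT]
    rw [Finset.card_insert_of_notMem (by simp [hjk, hjl, hjm]),
        Finset.card_insert_of_notMem (by simp [hkl, hkm]),
        Finset.card_insert_of_notMem (by simp [hlm]), Finset.card_singleton]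
  -- each index in T satisfies 2·Aᵢ ≤ A
  have hTbound : ∀ i ∈ T, 2 * brAi n α i ≤ brA n α := by
    intro i hi
    rw [hT] at hi
    simp only [Finset.mem_insert, Finset.mem_singleton] at hi
    rcases hi with rfl | rfl | rfl | rfl
    · exact two_brAi_le n α hα hjk h1
    · exact two_brAi_le n α hα hjk.symm (fun e => h1 (by rwa [Nat.gcd_comm]))
    · exact two_brAi_le n α hα hlm h2
    · exact two_brAi_le n α hα hlm.symm (fun e => h2 (by rwa [Nat.gcd_comm]))
  have hAle : ∀ i, brAi n α i ≤ brA n α := by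
    intro i
    rw [brA_eq n α hα i]
    exact Nat.le_mul_of_pos_right _ (Nat.gcd_pos_of_pos_left _ (hα i))
  -- split the sum
  have hsplit : (∑ i, (brAi n α i : ℚ)) =
      (∑ i ∈ Finset.univ \ T, (brAi n α i : ℚ)) + ∑ i ∈ T, (brAi n α i : ℚ) :=
    (Finset.sum_sdiff (Finset.subset_univ T)).symm
  have hTsum : (∑ i ∈ T, (brAi n α i : ℚ)) ≤ 4 * ((brA n α : ℚ) / 2) := by
    have : (∑ i ∈ T, (brAi n α i : ℚ)) ≤ ∑ _i ∈ T, ((brA n α : ℚ) / 2) := by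
      apply Finset.sum_le_sum
      intro i hi
      have := hTbound i hi
      have : (2 : ℚ) * (brAi n α i : ℚ) ≤ (brA n α : ℚ) := by exact_mod_cast this
      linarith
    simpa [hcardT] using this
  have hcomp : (∑ i ∈ Finset.univ \ T, (brAi n α i : ℚ)) ≤
      ((n : ℚ) - 4) * (brA n α : ℚ) := by
    have hcard : (Finset.univ \ T).card = n - 4 := by
      rw [Finset.card_sdiff_of_subset (Finset.subset_univ T), hcardT, Finset.card_univ,
        Fintype.card_fin]
    have : (∑ i ∈ Finset.univ \ T, (brAi n α i : ℚ)) ≤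
        ∑ _i ∈ Finset.univ \ T, (brA n α : ℚ) := by
      apply Finset.sum_le_sum
      intro i _
      exact_mod_cast hAle i
    rw [Finset.sum_const, hcard, nsmul_eq_mul] at this
    rwa [Nat.cast_sub hn, Nat.cast_ofNat] at this
  rw [genusEq] at hg
  have hApos : (0 : ℚ) < (brA n α : ℚ) := by
    have : 0 < brA n α := by
      have := brAi_pos n α hα j
      have h2A := hAle j
      omega
    exact_mod_cast this
  rw [hsplit] at hg
  nlinarith [hTsum, hcomp, hApos]
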